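/- Let X be a finite graph with |E(X)| edges and maximal degree deg(X). Then for all 0 ≤ λ < 1, F₁(X)(λ) − F₁(X)(0) ≤ 2·|E(X)|·deg(X)·λ, where F₁(X) is the spectral density function of the boundary map c₁ : ℓ²(E(X)) → ℓ²(V(X)). -/

import Mathlib

open scoped RealInnerProductSpace

variable {V E : Type*}

noncomputable def c1 [Fintype E] [DecidableEq V] (v0 v1 : E → V) :
    EuclideanSpace ℝ E →ₗ[ℝ] EuclideanSpace ℝ V where
  toFun a := WithLp.toLp 2 (fun v =>
    (∑ e ∈ Finset.univ.filter (fun e => v1 e = v), a e)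
      - (∑ e ∈ Finset.univ.filter (fun e => v0 e = v), a e))
  map_add' a b := by
    ext v
    simp [PiLp.add_apply, Finset.sum_add_distrib]
    try ring
  map_smul' c a := by
    ext v
    simp [PiLp.smul_apply, smul_eq_mul, ← Finset.mul_sum, mul_sub]

/-- Spectral density function of a linear map of inner product spaces. -/
noncomputable def sdf {V W : Type*} [NormedAddCommGroup V] [InnerProductSpace ℝ V]
    [NormedAddCommGroup W] [InnerProductSpace ℝ W]
    (f : V →ₗ[ℝ] W) (lam : ℝ) : ℕ :=
  sSup {n : ℕ | ∃ U : Submodule ℝ V, Module.finrank ℝ U = n ∧ ∀ v ∈ U, ‖f v‖ ≤ lam * ‖v‖}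

/-- Degree of a vertex in a finite directed multigraph (loops count twice). -/
def vdeg [Fintype E] [DecidableEq V] (v0 v1 : E → V) (v : V) : ℕ :=
  (Finset.univ.filter fun e => v0 e = v).card + (Finset.univ.filter fun e => v1 e = v).card

/-- Maximal vertex degree of a finite multigraph. -/
def maxDeg [Fintype V] [Fintype E] [DecidableEq V] (v0 v1 : E → V) : ℕ :=
  Finset.univ.sup (vdeg v0 v1)

/-- The simple graph underlying a directed multigraph. -/
def supportGraph (v0 v1 : E → V) : SimpleGraph V where
  Adj u w := u ≠ w ∧ ∃ e, (v0 e = u ∧ v1 e = w) ∨ (v0 e = w ∧ v1 e = u)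
  symm := ⟨by
    rintro u w ⟨h, e, he⟩
    exact ⟨h.symm, e, he.symm⟩⟩
  loopless := ⟨by rintro u ⟨h, _⟩; exact h rfl⟩

open Finset SimpleGraph




lemma gauss_real (n : ℕ) : ∑ i ∈ range n, (i:ℝ) = n * (n-1) / 2 := by
  induction n with
  | zero => simp
  | succ n ih => rw [Finset.sum_range_succ, ih]; push_cast; ring

lemma sum_absdiff_le (n : ℕ) :
    ∑ i ∈ range n, ∑ j ∈ range n, |(i:ℝ) - j| ≤ (n:ℝ)^3 / 3 := by
  induction n with
  | zero => simp
  | succ n ih =>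
    rw [Finset.sum_range_succ]
    simp only [Finset.sum_range_succ]
    rw [Finset.sum_add_distrib]
    have habs : ∀ i ∈ range n, |(i:ℝ) - n| = (n:ℝ) - i := by
      intro i hi
      rw [Finset.mem_range] at hi
      have : (i:ℝ) ≤ n := by exact_mod_cast hi.le
      rw [abs_of_nonpos (by linarith)]; ring
    have habs' : ∀ j ∈ range n, |(n:ℝ) - j| = (n:ℝ) - j := by
      intro j hj
      rw [Finset.mem_range] at hj
      have : (j:ℝ) ≤ n := by exact_mod_cast hj.le
      rw [abs_of_nonneg (by linarith)]
    rw [Finset.sum_congr rfl habs, Finset.sum_congr rfl habs']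
    have hsum : ∑ i ∈ range n, ((n:ℝ) - i) = n * n - n * (n-1)/2 := by
      rw [Finset.sum_sub_distrib, Finset.sum_const, gauss_real]
      simp only [Finset.card_range, nsmul_eq_mul]
    rw [hsum]
    simp only [sub_self, abs_zero, add_zero]
    have expand : (((n:ℕ)+1:ℕ):ℝ)^3/3 = (n:ℝ)^3/3 + n^2 + n + 1/3 := by push_cast; ring
    push_cast
    nlinarith [ih]

lemma poincare (a b : ℕ) (z : ℕ → ℝ) (hz : ∑ t ∈ Ico a b, z t = 0)
    (hsum_absdiff : ∀ n : ℕ, ∑ i ∈ range n, ∑ j ∈ range n, |(i:ℝ) - j| ≤ (n:ℝ)^3 / 3) :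
    ∑ t ∈ Ico a b, (z t)^2 ≤ (((b - a : ℕ) : ℝ)^2 / 6) * ∑ t ∈ Ico a (b-1), (z (t+1) - z t)^2 := by
  set D := ∑ t ∈ Ico a (b-1), (z (t+1) - z t)^2 with hD
  have hD0 : 0 ≤ D := Finset.sum_nonneg (fun t _ => sq_nonneg _)
  rcases le_or_gt b a with hba | hab
  · rw [Finset.Ico_eq_empty (by omega)]
    simp only [Finset.sum_empty]
    positivity
  set n := b - a with hn
  have hnpos : 0 < n := by omega
  -- single pair estimate
  have half : ∀ i j, a ≤ i → i ≤ j → j < b → (z j - z i)^2 ≤ ((j - i : ℕ):ℝ) * D := by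
    intro i j hai hij hjb
    have htel : z j - z i = ∑ k ∈ range (j - i), (z (i + k + 1) - z (i + k)) := by
      have h := Finset.sum_range_sub (fun k => z (i + k)) (j - i)
      rw [show i + (j - i) = j by omega] at h
      rw [show i + 0 = i by omega] at h
      rw [← h]
      apply Finset.sum_congr rfl
      intro k _
      rw [show i + (k+1) = i + k + 1 by omega]
    have hcs : (z j - z i)^2 ≤ ((j - i : ℕ):ℝ) * ∑ k ∈ range (j - i), (z (i + k + 1) - z (i + k))^2 := by
      rw [htel]
      have := Finset.sum_mul_sq_le_sq_mul_sq (range (j-i)) (fun _ => (1:ℝ))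
        (fun k => z (i + k + 1) - z (i + k))
      simp only [one_mul, one_pow, Finset.sum_const, Finset.card_range, nsmul_eq_mul, mul_one] at this
      exact this
    refine le_trans hcs (mul_le_mul_of_nonneg_left ?_ (by positivity))
    -- ∑ over range (j-i) shifted ≤ D
    rw [← Finset.sum_Ico_eq_sum_range (fun t => (z (t+1) - z t)^2) i j]
    apply Finset.sum_le_sum_of_subset_of_nonneg
    · intro t ht
      rw [Finset.mem_Ico] at *
      omega
    · intro t _ _; exact sq_nonneg _
  have key : ∀ i ∈ Ico a b, ∀ j ∈ Ico a b, (z i - z j)^2 ≤ |(i:ℝ) - j| * D := by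
    intro i hi j hj
    rw [Finset.mem_Ico] at hi hj
    rcases le_total i j with h | h
    · have := half i j hi.1 h hj.2
      rw [show (z i - z j)^2 = (z j - z i)^2 by ring]
      refine le_trans this ?_
      apply mul_le_mul_of_nonneg_right _ hD0
      rw [abs_sub_comm]
      rw [Nat.cast_sub h, abs_of_nonneg (by simp; exact_mod_cast h)]
    · have := half j i hj.1 h hi.2
      refine le_trans this ?_
      apply mul_le_mul_of_nonneg_right _ hD0
      rw [Nat.cast_sub h, abs_of_nonneg (by simp; exact_mod_cast h)]
  -- expand double sum
  have expand : ∑ i ∈ Ico a b, ∑ j ∈ Ico a b, (z i - z j)^2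
      = 2 * (n:ℝ) * ∑ t ∈ Ico a b, (z t)^2 := by
    have h1 : ∀ i j, (z i - z j)^2 = (z i)^2 - 2*(z i * z j) + (z j)^2 := by intros; ring
    simp_rw [h1]
    simp only [Finset.sum_add_distrib, Finset.sum_sub_distrib, ← Finset.mul_sum,
      Finset.sum_const, Nat.card_Ico, nsmul_eq_mul]
    rw [hz]
    rw [← Finset.sum_mul, hz]
    push_cast [← hn]
    ring
  -- abs-diff double sum bound
  have habssum : ∑ i ∈ Ico a b, ∑ j ∈ Ico a b, |(i:ℝ) - j| ≤ (n:ℝ)^3/3 := by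
    rw [Finset.sum_Ico_eq_sum_range]
    have : ∀ k ∈ range (b - a), ∑ j ∈ Ico a b, |((a + k : ℕ):ℝ) - j|
        = ∑ k' ∈ range (b-a), |(k:ℝ) - k'| := by
      intro k _
      rw [Finset.sum_Ico_eq_sum_range]
      apply Finset.sum_congr rfl
      intro k' _
      push_cast
      congr 1
      ring
    rw [Finset.sum_congr rfl this]
    exact hsum_absdiff n
  have hchain : 2 * (n:ℝ) * ∑ t ∈ Ico a b, (z t)^2 ≤ (n:ℝ)^3/3 * D := by
    rw [← expand]
    calc ∑ i ∈ Ico a b, ∑ j ∈ Ico a b, (z i - z j)^2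
        ≤ ∑ i ∈ Ico a b, ∑ j ∈ Ico a b, |(i:ℝ) - j| * D := by
          apply Finset.sum_le_sum; intro i hi
          apply Finset.sum_le_sum; intro j hj
          exact key i hi j hj
      _ = (∑ i ∈ Ico a b, ∑ j ∈ Ico a b, |(i:ℝ) - j|) * D := by
          simp_rw [← Finset.sum_mul]
      _ ≤ (n:ℝ)^3/3 * D := mul_le_mul_of_nonneg_right habssum hD0
  have hnR : (0:ℝ) < n := by exact_mod_cast hnpos

  nlinarith [hchain, hD0, hnR, Finset.sum_nonneg (fun t (_ : t ∈ Ico a b) => sq_nonneg (z t))]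


lemma exists_boundary (G : SimpleGraph V) {u : V} (p : G.Walk u u) :
    ∀ {s t : V} (_ : G.Walk s t), s ∈ p.support → t ∉ p.support →
    ∃ a b, G.Adj a b ∧ a ∈ p.support ∧ b ∉ p.support := by
  intro s t q
  induction q with
  | nil => intro hs ht; exact absurd hs ht
  | @cons s s' t h q ih =>
    intro hs ht
    by_cases hm : s' ∈ p.support
    · exact ih hm ht
    · exact ⟨s, s', h, hs, hm⟩

lemma extend_walk (G : SimpleGraph V) [DecidableEq V] {u a b : V} (p : G.Walk u u)
    (ha : a ∈ p.support) (hab : G.Adj a b) (hb : b ∉ p.support) :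
    ∃ p' : G.Walk u u, (∀ v ∈ p.support, v ∈ p'.support) ∧ b ∈ p'.support ∧
      (∀ e, p'.edges.count e ≤ p.edges.count e + (if e = s(a,b) then 2 else 0)) := by
  set T := p.takeUntil a ha with hT
  set Dr := p.dropUntil a ha with hDr
  set det : G.Walk a a := Walk.cons hab (Walk.cons hab.symm Walk.nil) with hdet
  refine ⟨T.append (det.append Dr), ?_, ?_, ?_⟩
  · intro v hv
    have hv' : v ∈ T.support ∨ v ∈ Dr.support := by
      have hspec := congrArg Walk.support (p.take_spec ha)
      rw [Walk.support_append] at hspec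
      rw [← hspec] at hv
      rcases List.mem_append.mp hv with h | h
      · exact Or.inl h
      · exact Or.inr (List.mem_of_mem_tail h)
    rw [Walk.support_append]
    rcases hv' with h | h
    · exact List.mem_append.mpr (Or.inl h)
    · -- v ∈ Dr.support ; Dr.support = a :: Dr.support.tail
      rw [Dr.support_eq_cons] at h
      rcases List.mem_cons.mp h with rfl | h
      · exact List.mem_append.mpr (Or.inl (Walk.end_mem_support T))
      · apply List.mem_append.mpr; right
        rw [Walk.support_append]
        have : det.support = [a, b, a] := by
          simp [hdet, Walk.support_cons, Walk.support_nil]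
        rw [this]
        simp only [List.cons_append, List.tail_cons]
        exact List.mem_cons.mpr (Or.inr (List.mem_cons.mpr (Or.inr (List.mem_append.mpr (Or.inr h)))))
  · rw [Walk.support_append]
    apply List.mem_append.mpr; right
    rw [Walk.support_append]
    have : det.support = [a, b, a] := by simp [hdet, Walk.support_cons, Walk.support_nil]
    rw [this]
    simp
  · intro e
    have hedges : (T.append (det.append Dr)).edges = T.edges ++ (det.edges ++ Dr.edges) := by
      rw [Walk.edges_append, Walk.edges_append]
    have hdete : det.edges = [s(a,b), s(a,b)] := by
      simp [hdet, Walk.edges_cons, Walk.edges_nil, Sym2.eq_swap]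
    have hTDr : T.edges.count e + Dr.edges.count e = p.edges.count e := by
      have hspec := congrArg Walk.edges (p.take_spec ha)
      rw [Walk.edges_append] at hspec
      rw [← hspec, List.count_append]
    rw [hedges, hdete]
    simp only [List.count_append]
    by_cases he : e = s(a,b)
    · subst he; simp [List.count_cons]; omega
    · simp [List.count_cons, he, Ne.symm he]
      omega


lemma support_reachable (G : SimpleGraph V) [DecidableEq V] {u v : V} (p : G.Walk u u)
    (hv : v ∈ p.support) : G.Reachable u v := ⟨p.takeUntil v hv⟩

open scoped Classical in
lemma cover_walk_aux (G : SimpleGraph V) [DecidableEq V] [Fintype V] {u : V} :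
    ∀ (k : ℕ) (p : G.Walk u u), (∀ e, p.edges.count e ≤ 2) →
      ((Finset.univ.filter (fun v => G.Reachable u v ∧ v ∉ p.support)).card ≤ k) →
      ∃ p' : G.Walk u u, (∀ v, G.Reachable u v → v ∈ p'.support) ∧ ∀ e, p'.edges.count e ≤ 2 := by
  intro k
  induction k with
  | zero =>
    intro p hc hcard
    refine ⟨p, ?_, hc⟩
    intro v hv
    by_contra hv'
    have : v ∈ Finset.univ.filter (fun v => G.Reachable u v ∧ v ∉ p.support) := by
      simp [hv, hv']
    have := Finset.card_pos.mpr ⟨v, this⟩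
    omega
  | succ k ih =>
    intro p hc hcard
    by_cases hall : ∀ v, G.Reachable u v → v ∈ p.support
    · exact ⟨p, hall, hc⟩
    · push_neg at hall
      obtain ⟨v, hv, hv'⟩ := hall
      obtain ⟨q⟩ := hv
      obtain ⟨x, y, hxy, hx, hy⟩ := exists_boundary G p q p.start_mem_support hv'
      obtain ⟨p', hsup, hbmem, hcnt⟩ := extend_walk G p hx hxy hy
      have hyreach : G.Reachable u y := (support_reachable G p hx).trans hxy.reachable
      apply ih p'
      · intro e
        rcases eq_or_ne e s(x,y) with rfl | hne
        · have h0 : p.edges.count s(x,y) = 0 := by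
            rw [List.count_eq_zero]
            intro hmem
            exact hy (Walk.snd_mem_support_of_mem_edges p hmem)
          have := hcnt s(x,y)
          simp [h0] at this
          omega
        · have h2 := hc e
          have := hcnt e
          simp [hne] at this
          omega
      · have hsub : (Finset.univ.filter (fun v => G.Reachable u v ∧ v ∉ p'.support))
            ⊆ (Finset.univ.filter (fun v => G.Reachable u v ∧ v ∉ p.support)).erase y := by
          intro w hw
          simp only [Finset.mem_filter, Finset.mem_univ, true_and] at hw
          rw [Finset.mem_erase]
          constructor
          · rintro rfl; exact hw.2 hbmem
          · simp only [Finset.mem_filter, Finset.mem_univ, true_and]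
            exact ⟨hw.1, fun hmem => hw.2 (hsup w hmem)⟩
        have hymem : y ∈ Finset.univ.filter (fun v => G.Reachable u v ∧ v ∉ p.support) := by
          simp [hyreach, hy]
        calc (Finset.univ.filter (fun v => G.Reachable u v ∧ v ∉ p'.support)).card
            ≤ _ := Finset.card_le_card hsub
          _ = (Finset.univ.filter (fun v => G.Reachable u v ∧ v ∉ p.support)).card - 1 :=
              Finset.card_erase_of_mem hymem
          _ ≤ k := by
              have := Finset.card_pos.mpr ⟨y, hymem⟩
              omega

lemma cover_walk (G : SimpleGraph V) [DecidableEq V] [Fintype V] (u : V) :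
    ∃ p : G.Walk u u, (∀ v, G.Reachable u v → v ∈ p.support) ∧ ∀ e, p.edges.count e ≤ 2 := by
  classical
  apply cover_walk_aux G (Fintype.card V) Walk.nil
  · intro e; simp [Walk.edges_nil]
  · exact le_trans (Finset.card_filter_le _ _) (by simp)


/-- sum over a finset contained in an image, bounded by sum of composite, for nonneg f -/
lemma sum_image_le' {α β : Type*} [DecidableEq α] [DecidableEq β] (s : Finset α) (g : α → β)
    (f : β → ℝ) (hf : ∀ b, 0 ≤ f b) :
    ∑ b ∈ s.image g, f b ≤ ∑ a ∈ s, f (g a) := by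
  induction s using Finset.induction with
  | empty => simp
  | @insert a s ha ih =>
    rw [Finset.image_insert, Finset.sum_insert ha]
    by_cases hmem : g a ∈ s.image g
    · rw [Finset.insert_eq_self.mpr hmem]
      have := hf (g a)
      linarith
    · rw [Finset.sum_insert hmem]
      linarith

lemma sum_subset_image_le {α β : Type*} (s : Finset α) (g : α → β)
    (T : Finset β) (f : β → ℝ) (hf : ∀ b, 0 ≤ f b) : ∀ [inst : DecidableEq β],
    T ⊆ s.image g →
    ∑ b ∈ T, f b ≤ ∑ a ∈ s, f (g a) := by
  classical
  intro inst hT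
  refine le_trans (Finset.sum_le_sum_of_subset_of_nonneg hT (fun b _ _ => hf b)) ?_
  convert sum_image_le' s g f hf using 2

lemma walk_diffsum (G : SimpleGraph V) (x : V → ℝ) (d : V)
    (f : Sym2 V → ℝ) (hf : ∀ p q : V, f s(p,q) = (x p - x q)^2) :
    ∀ {u v : V} (p : G.Walk u v),
    ∑ t ∈ range (p.support.length - 1),
        (x (p.support.getD (t+1) d) - x (p.support.getD t d))^2
      = (p.edges.map f).sum := by
  intro u v p
  induction p with
  | nil => simp [Walk.support_nil, Walk.edges_nil]
  | @cons u v' w h q ih =>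
    rw [Walk.support_cons, Walk.edges_cons]
    simp only [List.length_cons]
    rw [show q.support.length + 1 - 1 = (q.support.length - 1) + 1 by
      have := q.length_support; omega]
    rw [Finset.sum_range_succ']
    simp only [List.getD_cons_succ, List.getD_cons_zero]
    rw [ih]
    have hq0 : q.support.getD 0 d = v' := by
      rw [q.support_eq_cons]; rfl
    rw [hq0, List.map_cons, List.sum_cons, hf u v']
    ring
noncomputable def cT [Fintype E] (v0 v1 : E → V) :
    EuclideanSpace ℝ V →ₗ[ℝ] EuclideanSpace ℝ E where
  toFun x := WithLp.toLp 2 (fun e => x (v1 e) - x (v0 e))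
  map_add' x y := by
    ext e
    simp [PiLp.add_apply]
    ring
  map_smul' c x := by
    ext e
    simp [PiLp.smul_apply, smul_eq_mul]
    ring

lemma cT_apply [Fintype E] (v0 v1 : E → V) (x : EuclideanSpace ℝ V) (e : E) :
    cT v0 v1 x e = x (v1 e) - x (v0 e) := rfl

lemma norm_sq_eq_sum {ι : Type*} [Fintype ι] (y : EuclideanSpace ℝ ι) :
    ‖y‖^2 = ∑ i, (y i)^2 := by
  rw [← real_inner_self_eq_norm_sq]
  simp only [PiLp.inner_apply, RCLike.inner_apply, conj_trivial, sq]

lemma adj_identity [Fintype V] [Fintype E] [DecidableEq V] (v0 v1 : E → V)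
    (a : EuclideanSpace ℝ E) (x : EuclideanSpace ℝ V) :
    ⟪c1 v0 v1 a, x⟫ = ⟪a, cT v0 v1 x⟫ := by
  simp only [PiLp.inner_apply, RCLike.inner_apply, starRingEnd_apply, star_trivial]
  rw [Finset.sum_congr rfl (fun i _ => mul_comm (x i) _),
    Finset.sum_congr rfl (fun i _ => mul_comm (cT v0 v1 x i) _)]
  have key : ∀ w : E → V, ∑ v, (∑ e ∈ Finset.univ.filter (fun e => w e = v), a e) * x v
      = ∑ e, a e * x (w e) := by
    intro w
    rw [← Finset.sum_fiberwise_of_maps_to (fun e _ => Finset.mem_univ (w e))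
      (fun e => a e * x (w e))]
    apply Finset.sum_congr rfl
    intro v _
    rw [Finset.sum_mul]
    apply Finset.sum_congr rfl
    intro e he
    rw [Finset.mem_filter] at he
    rw [he.2]
  have lhs : ∑ v, (c1 v0 v1 a) v * x v = ∑ e, a e * x (v1 e) - ∑ e, a e * x (v0 e) := by
    have : ∀ v, (c1 v0 v1 a) v * x v
        = (∑ e ∈ Finset.univ.filter (fun e => v1 e = v), a e) * x v
          - (∑ e ∈ Finset.univ.filter (fun e => v0 e = v), a e) * x v := by
      intro v
      show ((∑ e ∈ Finset.univ.filter (fun e => v1 e = v), a e)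
        - (∑ e ∈ Finset.univ.filter (fun e => v0 e = v), a e)) * x v = _
      ring
    rw [Finset.sum_congr rfl (fun v _ => this v), Finset.sum_sub_distrib, key, key]
  rw [lhs]
  rw [← Finset.sum_sub_distrib]
  apply Finset.sum_congr rfl
  intro e _
  rw [cT_apply]
  ring
open Finset Module in
set_option maxHeartbeats 2000000 in
lemma core_lemma [Fintype V] [Fintype E] [DecidableEq V]
    (v0 v1 : E → V) (lam : ℝ) (hlam : 0 ≤ lam)
    (ι : Type*) [Fintype ι] (N : ι → ℕ) (slot : ι → ℕ → V) (comp : V → ι)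
    (hN : ∀ c, 1 ≤ N c)
    (hcomp : ∀ c t, t < N c → comp (slot c t) = c)
    (hcover : ∀ v, ∃ t, t < N (comp v) ∧ slot (comp v) t = v)
    (hedge : ∀ e : E, comp (v0 e) = comp (v1 e))
    (henergy : ∀ x : EuclideanSpace ℝ V,
      ∑ c, ∑ t ∈ Finset.range (N c - 1), (x (slot c (t+1)) - x (slot c t))^2
        ≤ 2 * ∑ e, (x (v1 e) - x (v0 e))^2)
    (ℓ : ℕ) (hl : 1 ≤ ℓ) (hwin : ((ℓ:ℝ) * lam)^2 < 3)
    (U : Submodule ℝ (EuclideanSpace ℝ E)) (hU : ∀ a ∈ U, ‖c1 v0 v1 a‖ ≤ lam * ‖a‖) :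
    finrank ℝ U ≤ finrank ℝ (LinearMap.ker (c1 v0 v1)) + ∑ c, (N c - 1) / ℓ := by
  classical
  set A := c1 v0 v1 with hA
  set C := cT v0 v1 with hC
  have hlpos : (0:ℝ) < ℓ := by exact_mod_cast hl
  -- rank facts
  have hkerCA : LinearMap.ker (C ∘ₗ A) = LinearMap.ker A := by
    ext a
    simp only [LinearMap.mem_ker, LinearMap.comp_apply]
    constructor
    · intro h
      have h2 : ⟪A a, A a⟫ = (0:ℝ) := by
        rw [adj_identity v0 v1 a (A a), ← hC, h, inner_zero_right]
      exact inner_self_eq_zero.mp h2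
    · intro h; rw [h]; simp
  have hrank : finrank ℝ (LinearMap.range A) ≤ finrank ℝ (LinearMap.range C) := by
    have h1 := LinearMap.finrank_range_add_finrank_ker (C ∘ₗ A)
    have h2 := LinearMap.finrank_range_add_finrank_ker A
    rw [hkerCA] at h1
    have h3 : finrank ℝ (LinearMap.range (C ∘ₗ A)) ≤ finrank ℝ (LinearMap.range C) :=
      Submodule.finrank_mono (LinearMap.range_comp_le_range A C)
    omega
  set Y := LinearMap.range C with hY
  set U'' := U ⊓ Y with hU''
  have hdim1 : finrank ℝ U ≤ finrank ℝ (LinearMap.ker A) + finrank ℝ U'' := by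
    have h4 := Submodule.finrank_sup_add_finrank_inf_eq U Y
    have h5 : finrank ℝ (U ⊔ Y : Submodule ℝ (EuclideanSpace ℝ E)) ≤ Fintype.card E :=
      le_trans (Submodule.finrank_le _) (le_of_eq finrank_euclideanSpace)
    have h6 := LinearMap.finrank_range_add_finrank_ker A
    rw [finrank_euclideanSpace] at h6
    rw [← hU''] at h4
    omega
  -- blocks
  set nb : ι → ℕ := fun c => (N c - 1) / ℓ + 1 with hnb
  set blk : ι → ℕ → Finset ℕ := fun c j => (Finset.range (N c)).filter (fun t => t / ℓ = j)
    with hblk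
  have hblk_eq : ∀ c j, blk c j = Finset.Ico (j*ℓ) (min ((j+1)*ℓ) (N c)) := by
    intro c j
    ext t
    simp only [hblk, Finset.mem_filter, Finset.mem_range, Finset.mem_Ico, lt_min_iff]
    constructor
    · rintro ⟨ht, rfl⟩
      refine ⟨Nat.div_mul_le_self t ℓ, ?_, ht⟩
      exact (Nat.div_lt_iff_lt_mul (by omega)).mp (Nat.lt_succ_self _)
    · rintro ⟨h1, h2, h3⟩
      refine ⟨h3, ?_⟩
      have hle : j ≤ t / ℓ := (Nat.le_div_iff_mul_le (by omega)).mpr h1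
      have hlt : t / ℓ < j + 1 := (Nat.div_lt_iff_lt_mul (by omega)).mpr h2
      omega
  have hdiv_lt : ∀ c t, t < N c → t / ℓ < nb c := by
    intro c t ht
    have h1 : t ≤ N c - 1 := by omega
    have := Nat.div_le_div_right (c := ℓ) h1
    simp only [hnb]
    omega
  have hsz_le : ∀ c j, (blk c j).card ≤ ℓ := by
    intro c j
    rw [hblk_eq, Nat.card_Ico]
    have h3 : (j+1)*ℓ = j*ℓ + ℓ := by ring
    rcases le_total ((j+1)*ℓ) (N c) with hmin | hmin
    · rw [min_eq_left hmin]
      omega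
    · rw [min_eq_right hmin]
      omega
  have hsz0_mem : ∀ c, 0 ∈ blk c 0 := by
    intro c
    simp only [hblk, Finset.mem_filter, Finset.mem_range]
    exact ⟨by have := hN c; omega, Nat.zero_div ℓ⟩
  have hsz0_pos : ∀ c, (0:ℝ) < ((blk c 0).card : ℝ) := by
    intro c
    have := Finset.card_pos.mpr ⟨0, hsz0_mem c⟩
    exact_mod_cast this
  -- index type and linear map T
  set Bs : ι → ℕ → EuclideanSpace ℝ V → ℝ := fun c j x => ∑ t ∈ blk c j, x (slot c t) with hBs
  set T : EuclideanSpace ℝ V →ₗ[ℝ] (((c : ι) × Fin ((N c - 1)/ℓ)) → ℝ) :=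
    { toFun := fun x i => ((blk i.1 0).card : ℝ) * Bs i.1 (i.2.val + 1) x
        - ((blk i.1 (i.2.val + 1)).card : ℝ) * Bs i.1 0 x
      map_add' := by
        intro x y
        funext i
        simp only [hBs, PiLp.add_apply, Finset.sum_add_distrib, Pi.add_apply]
        ring
      map_smul' := by
        intro m x
        funext i
        simp only [hBs, PiLp.smul_apply, smul_eq_mul, ← Finset.mul_sum, RingHom.id_apply,
          Pi.smul_apply]
        ring } with hT
  -- right inverse of C onto its range
  obtain ⟨g, hg⟩ := LinearMap.exists_rightInverse_of_surjective C.rangeRestrict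
    (LinearMap.range_eq_top.mpr C.surjective_rangeRestrict)
  have hCg : ∀ y : Y, C (g y) = (y : EuclideanSpace ℝ E) := by
    intro y
    have h := LinearMap.congr_fun hg y
    have : C.rangeRestrict (g y) = y := h
    exact congrArg Subtype.val this
  set incl : U'' →ₗ[ℝ] Y := Submodule.inclusion inf_le_right with hincl
  set Ψ : U'' →ₗ[ℝ] (((c : ι) × Fin ((N c - 1)/ℓ)) → ℝ) := T ∘ₗ g ∘ₗ incl with hΨ
  have hinj : Function.Injective Ψ := by
    rw [injective_iff_map_eq_zero]
    intro w hw
    by_contra hw0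
    have hwne : (w : EuclideanSpace ℝ E) ≠ 0 := by
      intro h
      exact hw0 (Subtype.ext h)
    set x0 : EuclideanSpace ℝ V := g (incl w) with hx0
    have hCx0 : C x0 = (w : EuclideanSpace ℝ E) := hCg (incl w)
    set avg : ι → ℝ := fun c => Bs c 0 x0 / ((blk c 0).card : ℝ) with havg
    set sh : EuclideanSpace ℝ V := WithLp.toLp 2 (fun v => avg (comp v)) with hsh
    set x : EuclideanSpace ℝ V := x0 - sh with hx
    have hxapp : ∀ v, x v = x0 v - avg (comp v) := by
      intro v; simp [hx, hsh, PiLp.sub_apply]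
    have hCx : C x = (w : EuclideanSpace ℝ E) := by
      rw [← hCx0]
      ext e
      rw [cT_apply, cT_apply, hxapp, hxapp, hedge e]
      ring
    -- block sums of x vanish
    have hBs_shift : ∀ c j, Bs c j x = Bs c j x0 - ((blk c j).card : ℝ) * avg c := by
      intro c j
      simp only [hBs]
      rw [Finset.sum_congr rfl (fun t ht => hxapp (slot c t)),
        Finset.sum_sub_distrib]
      congr 1
      have : ∀ t ∈ blk c j, avg (comp (slot c t)) = avg c := by
        intro t ht
        simp only [hblk, Finset.mem_filter, Finset.mem_range] at ht
        rw [hcomp c t ht.1]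
      rw [Finset.sum_congr rfl this, Finset.sum_const, nsmul_eq_mul]
    have hTx0 : ∀ i : ((c : ι) × Fin ((N c - 1)/ℓ)),
        ((blk i.1 0).card : ℝ) * Bs i.1 (i.2.val + 1) x0
          = ((blk i.1 (i.2.val + 1)).card : ℝ) * Bs i.1 0 x0 := by
      intro i
      have := congrFun hw i
      simp only [hΨ, LinearMap.comp_apply, hT, LinearMap.coe_mk, AddHom.coe_mk,
        Pi.zero_apply] at this
      linarith [this]
    have hBx : ∀ c j, Bs c j x = 0 := by
      intro c j
      have hc0 := hsz0_pos c
      rcases Nat.eq_zero_or_pos j with rfl | hj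
      · rw [hBs_shift]
        simp only [havg]
        rw [mul_div_cancel₀ _ (ne_of_gt hc0)]
        ring
      · rcases Nat.exists_eq_add_of_lt hj with ⟨j', rfl⟩
        simp only [zero_add]
        by_cases hjlt : j' < (N c - 1)/ℓ
        · have h := hTx0 ⟨c, ⟨j', hjlt⟩⟩
          have h2 : Bs c (j' + 1) x0
              = (((blk c (j' + 1)).card : ℝ) * Bs c 0 x0) / ((blk c 0).card : ℝ) := by
            rw [eq_div_iff (ne_of_gt hc0)]
            linarith [h]
          rw [hBs_shift, h2]
          simp only [havg]
          ring
        · have hempty : blk c (j' + 1) = ∅ := by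
            apply Finset.filter_eq_empty_iff.mpr
            intro t ht
            rw [Finset.mem_range] at ht
            have := hdiv_lt c t ht
            simp only [hnb] at this
            omega
          simp only [hBs, hempty, Finset.sum_empty]
    -- per-component Poincaré estimate
    have hblock : ∀ c, ∑ t ∈ Finset.range (N c), (x (slot c t))^2
        ≤ ((ℓ:ℝ)^2/6) * ∑ t ∈ Finset.range (N c - 1), (x (slot c (t+1)) - x (slot c t))^2 := by
      intro c
      have hpart : ∑ t ∈ Finset.range (N c), (x (slot c t))^2
          = ∑ j ∈ Finset.range (nb c), ∑ t ∈ blk c j, (x (slot c t))^2 := by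
        simp only [hblk]
        exact (Finset.sum_fiberwise_of_maps_to (fun t ht => Finset.mem_range.mpr
          (hdiv_lt c t (Finset.mem_range.mp ht))) _).symm
      rw [hpart]
      have hjb : ∀ j ∈ Finset.range (nb c), ∑ t ∈ blk c j, (x (slot c t))^2
          ≤ ((ℓ:ℝ)^2/6) * ∑ t ∈ Finset.Ico (j*ℓ) (min ((j+1)*ℓ) (N c) - 1),
              (x (slot c (t+1)) - x (slot c t))^2 := by
        intro j _
        rw [hblk_eq]
        have hp := poincare (j*ℓ) (min ((j+1)*ℓ) (N c)) (fun t => x (slot c t))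
            (by rw [← hblk_eq]; exact hBx c j) sum_absdiff_le
        refine le_trans hp ?_
        refine mul_le_mul_of_nonneg_right ?_ (Finset.sum_nonneg fun t _ => sq_nonneg _)
        have hba : (min ((j+1)*ℓ) (N c) - j*ℓ) ≤ ℓ := by
          have h3 : (j+1)*ℓ = j*ℓ + ℓ := by ring
          rcases le_total ((j+1)*ℓ) (N c) with hmin | hmin
          · rw [min_eq_left hmin]
            omega
          · rw [min_eq_right hmin]
            omega
        have hba' : ((min ((j+1)*ℓ) (N c) - j*ℓ : ℕ):ℝ) ≤ (ℓ:ℝ) := by exact_mod_cast hba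
        have h0 : (0:ℝ) ≤ ((min ((j+1)*ℓ) (N c) - j*ℓ : ℕ):ℝ) := by positivity
        nlinarith [hba', h0]
      refine le_trans (Finset.sum_le_sum hjb) ?_
      rw [← Finset.mul_sum]
      refine mul_le_mul_of_nonneg_left ?_ (by positivity)
      have hdisj : (↑(Finset.range (nb c)) : Set ℕ).PairwiseDisjoint
          (fun j => Finset.Ico (j*ℓ) (min ((j+1)*ℓ) (N c) - 1)) := by
        intro j1 _ j2 _ hne
        apply Finset.disjoint_left.mpr
        intro t ht1 ht2
        rw [Finset.mem_Ico] at ht1 ht2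
        exfalso
        rcases lt_or_gt_of_ne hne with h | h
        · have hmul := Nat.mul_le_mul_right ℓ (show j1+1 ≤ j2 from h)
          have hm : min ((j1+1)*ℓ) (N c) - 1 ≤ (j1+1)*ℓ :=
            le_trans (Nat.sub_le _ _) (min_le_left _ _)
          omega
        · have hmul := Nat.mul_le_mul_right ℓ (show j2+1 ≤ j1 from h)
          have hm : min ((j2+1)*ℓ) (N c) - 1 ≤ (j2+1)*ℓ :=
            le_trans (Nat.sub_le _ _) (min_le_left _ _)
          omega
      rw [← Finset.sum_biUnion hdisj]
      apply Finset.sum_le_sum_of_subset_of_nonneg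
      · intro t ht
        rw [Finset.mem_biUnion] at ht
        obtain ⟨j, _, ht⟩ := ht
        rw [Finset.mem_Ico] at ht
        rw [Finset.mem_range]
        have hmr : min ((j+1)*ℓ) (N c) ≤ N c := min_le_right _ _
        omega
      · intro t _ _
        exact sq_nonneg _
    -- assemble the contradiction
    have hcov : ∑ v, (x v)^2 ≤ ∑ c, ∑ t ∈ Finset.range (N c), (x (slot c t))^2 := by
      rw [← Finset.sum_fiberwise_of_maps_to (fun v (_ : v ∈ Finset.univ) => Finset.mem_univ (comp v))
        (fun v => (x v)^2)]
      apply Finset.sum_le_sum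
      intro c _
      apply sum_subset_image_le (Finset.range (N c)) (slot c) _ _ (fun v => sq_nonneg (x v))
      intro v hv
      rw [Finset.mem_filter] at hv
      obtain ⟨t, ht, hst⟩ := hcover v
      rw [hv.2] at ht hst
      exact Finset.mem_image.mpr ⟨t, Finset.mem_range.mpr ht, hst⟩
    have hen := henergy x
    have hCxe : ∀ e, x (v1 e) - x (v0 e) = (w : EuclideanSpace ℝ E) e := by
      intro e
      rw [← hCx]
      rfl
    have hnormw : ∑ e, (x (v1 e) - x (v0 e))^2 = ‖(w : EuclideanSpace ℝ E)‖^2 := by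
      rw [norm_sq_eq_sum]
      exact Finset.sum_congr rfl (fun e _ => by rw [hCxe e])
    have hnx : ‖x‖^2 ≤ ((ℓ:ℝ)^2/3) * ‖(w : EuclideanSpace ℝ E)‖^2 := by
      rw [norm_sq_eq_sum]
      calc ∑ v, (x v)^2 ≤ ∑ c, ∑ t ∈ Finset.range (N c), (x (slot c t))^2 := hcov
        _ ≤ ∑ c, ((ℓ:ℝ)^2/6) * ∑ t ∈ Finset.range (N c - 1),
              (x (slot c (t+1)) - x (slot c t))^2 :=
            Finset.sum_le_sum (fun c _ => hblock c)
        _ = ((ℓ:ℝ)^2/6) * ∑ c, ∑ t ∈ Finset.range (N c - 1),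
              (x (slot c (t+1)) - x (slot c t))^2 := by
            rw [Finset.mul_sum]
        _ ≤ ((ℓ:ℝ)^2/6) * (2 * ∑ e, (x (v1 e) - x (v0 e))^2) :=
            mul_le_mul_of_nonneg_left hen (by positivity)
        _ = ((ℓ:ℝ)^2/3) * ‖(w : EuclideanSpace ℝ E)‖^2 := by
            rw [hnormw]; ring
    have hinner : ⟪A (w : EuclideanSpace ℝ E), x⟫ = ‖(w : EuclideanSpace ℝ E)‖^2 := by
      rw [hA, adj_identity v0 v1 _ x, ← hC, hCx, real_inner_self_eq_norm_sq]
    have hAw : ‖A (w : EuclideanSpace ℝ E)‖ ≤ lam * ‖(w : EuclideanSpace ℝ E)‖ :=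
      hU _ (Submodule.mem_inf.mp w.2).1
    have hw2 : ‖(w : EuclideanSpace ℝ E)‖^2 ≤ lam * ‖(w : EuclideanSpace ℝ E)‖ * ‖x‖ := by
      rw [← hinner]
      refine le_trans (real_inner_le_norm _ _) ?_
      exact mul_le_mul_of_nonneg_right hAw (norm_nonneg _)
    have hwpos : 0 < ‖(w : EuclideanSpace ℝ E)‖ := norm_pos_iff.mpr hwne
    have hxw : ‖(w : EuclideanSpace ℝ E)‖ ≤ lam * ‖x‖ := by
      nlinarith [hw2, hwpos]
    have hxw2 : ‖(w : EuclideanSpace ℝ E)‖^2 ≤ (lam * ‖x‖)^2 := by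
      have := pow_le_pow_left₀ (norm_nonneg (w : EuclideanSpace ℝ E)) hxw 2
      exact this
    have hs : 0 < ‖(w : EuclideanSpace ℝ E)‖^2 := by positivity
    have h3 : lam^2 * ‖x‖^2 ≤ lam^2 * (((ℓ:ℝ)^2/3) * ‖(w : EuclideanSpace ℝ E)‖^2) :=
      mul_le_mul_of_nonneg_left hnx (sq_nonneg lam)
    nlinarith [hxw2, h3, hwin, hs]
  have hdim2 : finrank ℝ U'' ≤ ∑ c, (N c - 1)/ℓ := by
    have h := LinearMap.finrank_le_finrank_of_injective hinj
    rw [Module.finrank_pi, Fintype.card_sigma] at h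
    simpa using h
  omega

open Finset Module in
set_option maxHeartbeats 2000000 in
/-- Main theorem: for a finite graph X and 0 ≤ λ < 1,
F₁(X)(λ) − F₁(X)(0) ≤ 2·|E(X)|·deg(X)·λ. -/
theorem main_sdf_estimate {V E : Type*} [Fintype V] [Fintype E] [DecidableEq V]
    (v0 v1 : E → V) (lam : ℝ) (h0 : 0 ≤ lam) (h1 : lam < 1) :
    (sdf (c1 v0 v1) lam : ℝ) - (sdf (c1 v0 v1) 0 : ℝ) ≤
      2 * (Fintype.card E : ℝ) * (maxDeg v0 v1 : ℝ) * lam := by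
  classical
  set A := c1 v0 v1 with hA
  -- the defining sets of the sdf
  have hbdd : ∀ mu : ℝ, BddAbove {n : ℕ | ∃ U : Submodule ℝ (EuclideanSpace ℝ E),
      Module.finrank ℝ U = n ∧ ∀ v ∈ U, ‖A v‖ ≤ mu * ‖v‖} := by
    intro mu
    refine ⟨Fintype.card E, ?_⟩
    rintro n ⟨U, rfl, -⟩
    exact le_trans (Submodule.finrank_le U) (le_of_eq finrank_euclideanSpace)
  have hne : ∀ mu : ℝ, {n : ℕ | ∃ U : Submodule ℝ (EuclideanSpace ℝ E),
      Module.finrank ℝ U = n ∧ ∀ v ∈ U, ‖A v‖ ≤ mu * ‖v‖}.Nonempty := by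
    intro mu
    refine ⟨0, ⊥, finrank_bot ℝ _, ?_⟩
    intro v hv
    rw [Submodule.mem_bot] at hv
    subst hv
    simp
  obtain ⟨U, hUrank, hUprop⟩ := Nat.sSup_mem (hne lam) (hbdd lam)
  have hsdflam : sdf A lam = Module.finrank ℝ U := hUrank.symm
  have hker : Module.finrank ℝ (LinearMap.ker A) ≤ sdf A 0 := by
    apply le_csSup (hbdd 0)
    refine ⟨LinearMap.ker A, rfl, ?_⟩
    intro v hv
    rw [LinearMap.mem_ker] at hv
    simp [hv]
  rw [hsdflam]
  have hkerR : (Module.finrank ℝ (LinearMap.ker A) : ℝ) ≤ (sdf A 0 : ℝ) := by exact_mod_cast hker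
  -- it suffices to bound finrank U
  have main : (Module.finrank ℝ U : ℝ) ≤ (Module.finrank ℝ (LinearMap.ker A) : ℝ)
      + 2 * (Fintype.card E : ℝ) * (maxDeg v0 v1 : ℝ) * lam := by
    rcases Nat.eq_zero_or_pos (Fintype.card E) with hE0 | hEpos
    · -- no edges
      have : Module.finrank ℝ U = 0 := by
        have := le_trans (Submodule.finrank_le U) (le_of_eq (finrank_euclideanSpace (𝕜 := ℝ)))
        omega
      rw [this]
      simp only [Nat.cast_zero]
      positivity
    · -- there is an edge, hence maxDeg ≥ 1
      obtain ⟨e⟩ := Fintype.card_pos_iff.mp hEpos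
      have hd1 : 1 ≤ maxDeg v0 v1 := by
        have h1' : 1 ≤ vdeg v0 v1 (v0 e) := by
          rw [vdeg]
          have : e ∈ Finset.univ.filter (fun e' => v0 e' = v0 e) := by simp
          have := Finset.card_pos.mpr ⟨e, this⟩
          omega
        exact le_trans h1' (Finset.le_sup (Finset.mem_univ _))
      set d := maxDeg v0 v1 with hd
      have hdR : (1:ℝ) ≤ (d:ℝ) := by exact_mod_cast hd1
      rcases le_or_gt 1 (lam * (2*d)) with hbig | hsmall
      · -- trivial regime
        have hUle : (Module.finrank ℝ U : ℝ) ≤ (Fintype.card E : ℝ) := by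
          exact_mod_cast le_trans (Submodule.finrank_le U) (le_of_eq finrank_euclideanSpace)
        have : (Fintype.card E : ℝ) ≤ 2 * (Fintype.card E : ℝ) * (d:ℝ) * lam := by
          have hcE : (1:ℝ) ≤ (Fintype.card E : ℝ) := by exact_mod_cast hEpos
          nlinarith [hbig, hcE]
        have h0' : (0:ℝ) ≤ (Module.finrank ℝ (LinearMap.ker A) : ℝ) := by positivity
        linarith [hUle, this, h0']
      · -- main regime
        rcases eq_or_lt_of_le h0 with hlam0 | hlampos
        · -- lam = 0
          have hUsub : U ≤ LinearMap.ker A := by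
            intro a ha
            rw [LinearMap.mem_ker]
            have := hUprop a ha
            rw [← hlam0] at this
            simp only [zero_mul] at this
            exact norm_le_zero_iff.mp this
          have := Submodule.finrank_mono hUsub
          have hle : (Module.finrank ℝ U : ℝ) ≤ (Module.finrank ℝ (LinearMap.ker A) : ℝ) := by
            exact_mod_cast this
          have : (0:ℝ) ≤ 2 * (Fintype.card E : ℝ) * (d:ℝ) * lam := by
            rw [← hlam0]; ring_nf; exact le_refl 0
          linarith
        · -- 0 < lam < 1/(2d)
          set ℓ : ℕ := ⌈((d:ℝ) * lam)⁻¹⌉₊ with hℓ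
          have hdlampos : 0 < (d:ℝ) * lam := by positivity
          have hl1 : 1 ≤ ℓ := by
            rw [hℓ]
            apply Nat.one_le_ceil_iff.mpr
            positivity
          have hlge : ((d:ℝ) * lam)⁻¹ ≤ (ℓ:ℝ) := Nat.le_ceil _
          have hllt : (ℓ:ℝ) < ((d:ℝ) * lam)⁻¹ + 1 := Nat.ceil_lt_add_one (by positivity)
          have hdpos : (0:ℝ) < (d:ℝ) := by linarith
          have hinv : lam * ((d:ℝ)*lam)⁻¹ = (d:ℝ)⁻¹ := by
            rw [mul_inv, mul_comm ((d:ℝ)⁻¹) lam⁻¹, ← mul_assoc,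
              mul_inv_cancel₀ (ne_of_gt hlampos), one_mul]
          have h4 : (ℓ:ℝ)*lam < lam * ((d:ℝ)*lam)⁻¹ + lam := by
            nlinarith [mul_lt_mul_of_pos_right hllt hlampos]
          rw [hinv] at h4
          have hddinv : (d:ℝ) * (d:ℝ)⁻¹ = 1 := mul_inv_cancel₀ (ne_of_gt hdpos)
          have h5 : lam < (d:ℝ)⁻¹/2 := by
            have hpos2 : 0 < (d:ℝ)⁻¹/2 := by positivity
            have heq : lam * (2*(d:ℝ)) * ((d:ℝ)⁻¹/2) = lam * ((d:ℝ) * (d:ℝ)⁻¹) := by ring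
            calc lam = lam * (2*(d:ℝ)) * ((d:ℝ)⁻¹/2) := by rw [heq, hddinv, mul_one]
              _ < 1 * ((d:ℝ)⁻¹/2) := mul_lt_mul_of_pos_right hsmall hpos2
              _ = (d:ℝ)⁻¹/2 := one_mul _
          have h6 : (d:ℝ)⁻¹ ≤ 1 := by
            have h61 : (d:ℝ)⁻¹ * 1 ≤ (d:ℝ)⁻¹ * (d:ℝ) := by
              apply mul_le_mul_of_nonneg_left hdR
              positivity
            rw [mul_one, mul_comm, hddinv] at h61
            exact h61
          have h32 : (ℓ:ℝ) * lam < 3/2 := by linarith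
          have hwin : ((ℓ:ℝ) * lam)^2 < 3 := by
            have hlpos : (0:ℝ) ≤ (ℓ:ℝ) * lam := by positivity
            nlinarith [h32, hlpos]
          -- construct the walk data
          set G := supportGraph v0 v1 with hG
          haveI : DecidableRel G.Adj := fun a b => Classical.dec _
          haveI : DecidableEq G.ConnectedComponent := Classical.decEq _
          haveI : Fintype G.ConnectedComponent :=
            Fintype.ofSurjective G.connectedComponentMk (Quot.exists_rep)
          set root : G.ConnectedComponent → V := fun c => c.out with hroot
          have hrootc : ∀ c, G.connectedComponentMk (root c) = c := fun c => c.out_eq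
          have hwalks := fun c => cover_walk G (root c)
          set wk : (c : G.ConnectedComponent) → G.Walk (root c) (root c) :=
            fun c => (hwalks c).choose with hwk
          have hwkcov : ∀ c, ∀ v, G.Reachable (root c) v → v ∈ (wk c).support :=
            fun c => (hwalks c).choose_spec.1
          have hwkcnt : ∀ c, ∀ e', ((wk c).edges.count e') ≤ 2 :=
            fun c => (hwalks c).choose_spec.2
          set N : G.ConnectedComponent → ℕ := fun c => (wk c).support.length with hN
          set slot : G.ConnectedComponent → ℕ → V := fun c t => (wk c).support.getD t (root c)
            with hslot
          set comp : V → G.ConnectedComponent := fun v => G.connectedComponentMk v with hcomp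
          -- hypotheses for the core lemma
          have hNc : ∀ c, 1 ≤ N c := by
            intro c
            have := (wk c).length_support
            simp only [hN]
            omega
          have hslot_mem : ∀ c t, t < N c → slot c t ∈ (wk c).support := by
            intro c t ht
            simp only [hslot]
            rw [List.getD_eq_getElem _ _ ht]
            exact List.getElem_mem _
          have hcompc : ∀ c t, t < N c → comp (slot c t) = c := by
            intro c t ht
            have hmem := hslot_mem c t ht
            have : G.Reachable (root c) (slot c t) := support_reachable G (wk c) hmem
            have h2 : G.connectedComponentMk (slot c t) = G.connectedComponentMk (root c) :=
              (SimpleGraph.ConnectedComponent.eq.mpr this).symm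
            simp only [hcomp]
            rw [h2, hrootc c]
          have hcover : ∀ v, ∃ t, t < N (comp v) ∧ slot (comp v) t = v := by
            intro v
            have hreach : G.Reachable (root (comp v)) v := by
              apply SimpleGraph.ConnectedComponent.eq.mp
              rw [hrootc (comp v)]
            have hmem := hwkcov (comp v) v hreach
            obtain ⟨t, ht, hget⟩ := List.mem_iff_getElem.mp hmem
            refine ⟨t, ht, ?_⟩
            simp only [hslot]
            rw [List.getD_eq_getElem _ _ ht]
            exact hget
          have hedgec : ∀ e' : E, comp (v0 e') = comp (v1 e') := by
            intro e'
            rcases eq_or_ne (v0 e') (v1 e') with h | h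
            · rw [h]
            · apply SimpleGraph.ConnectedComponent.eq.mpr
              apply SimpleGraph.Adj.reachable
              exact ⟨h, e', Or.inl ⟨rfl, rfl⟩⟩
          -- edge accounting
          set edgeOf : Sym2 V → G.ConnectedComponent :=
            fun s => G.connectedComponentMk (Quot.out s).1 with hedgeOf
          have hwkedge : ∀ c (s : Sym2 V), s ∈ (wk c).edges → edgeOf s = c := by
            intro c s hs
            have houts : s((Quot.out s).1, (Quot.out s).2) = s := Quot.out_eq s
            rw [← houts] at hs
            have hfst := SimpleGraph.Walk.fst_mem_support_of_mem_edges _ hs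
            have := support_reachable G (wk c) hfst
            simp only [hedgeOf]
            rw [← hrootc c]
            exact (SimpleGraph.ConnectedComponent.eq.mpr this).symm
          have hedge_in : ∀ c (s : Sym2 V), s ∈ (wk c).edges → s ∈ G.edgeFinset := by
            intro c s hs
            rw [SimpleGraph.mem_edgeFinset]
            exact (wk c).edges_subset_edgeSet hs
          -- energy estimate
          have henergy : ∀ x : EuclideanSpace ℝ V,
              ∑ c, ∑ t ∈ Finset.range (N c - 1), (x (slot c (t+1)) - x (slot c t))^2
                ≤ 2 * ∑ e', (x (v1 e') - x (v0 e'))^2 := by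
            intro x
            set f : Sym2 V → ℝ := Sym2.lift ⟨fun p q => (x p - x q)^2, by intros; ring⟩ with hf
            have hfmk : ∀ p q : V, f s(p,q) = (x p - x q)^2 := fun p q => rfl
            have hfnn : ∀ s, 0 ≤ f s := by
              intro s
              induction s using Sym2.ind with
              | _ p q => rw [hfmk]; exact sq_nonneg _
            have hstep1 : ∀ c, ∑ t ∈ Finset.range (N c - 1),
                (x (slot c (t+1)) - x (slot c t))^2 = ((wk c).edges.map f).sum := by
              intro c
              simp only [hN, hslot]
              exact walk_diffsum G (fun v => x v) (root c) f hfmk (wk c)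
            have hstep2 : ∀ c, ((wk c).edges.map f).sum
                ≤ 2 * ∑ s ∈ G.edgeFinset.filter (fun s => edgeOf s = c), f s := by
              intro c
              rw [Finset.sum_list_map_count]
              have hsub : ((wk c).edges.toFinset) ⊆ G.edgeFinset.filter (fun s => edgeOf s = c) := by
                intro s hs
                rw [List.mem_toFinset] at hs
                rw [Finset.mem_filter]
                exact ⟨hedge_in c s hs, hwkedge c s hs⟩
              calc ∑ s ∈ (wk c).edges.toFinset, ((wk c).edges.count s) • f s
                  ≤ ∑ s ∈ (wk c).edges.toFinset, 2 * f s := by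
                    apply Finset.sum_le_sum
                    intro s hs
                    rw [nsmul_eq_mul]
                    apply mul_le_mul_of_nonneg_right _ (hfnn s)
                    exact_mod_cast hwkcnt c s
                _ = 2 * ∑ s ∈ (wk c).edges.toFinset, f s := by rw [Finset.mul_sum]
                _ ≤ 2 * ∑ s ∈ G.edgeFinset.filter (fun s => edgeOf s = c), f s := by
                    apply mul_le_mul_of_nonneg_left _ (by norm_num)
                    exact Finset.sum_le_sum_of_subset_of_nonneg hsub (fun s _ _ => hfnn s)
            have hstep3 : ∑ c, ∑ s ∈ G.edgeFinset.filter (fun s => edgeOf s = c), f s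
                = ∑ s ∈ G.edgeFinset, f s :=
              Finset.sum_fiberwise_of_maps_to (fun s _ => Finset.mem_univ (edgeOf s)) f
            have hstep4 : ∑ s ∈ G.edgeFinset, f s ≤ ∑ e', (x (v1 e') - x (v0 e'))^2 := by
              have hgf : ∀ e' : E, f s(v0 e', v1 e') = (x (v0 e') - x (v1 e'))^2 := fun e' => rfl
              have himg : G.edgeFinset ⊆ Finset.univ.image (fun e' : E => s(v0 e', v1 e')) := by
                intro s hs
                rw [SimpleGraph.mem_edgeFinset] at hs
                induction s using Sym2.ind with
                | _ p q =>
                  rw [SimpleGraph.mem_edgeSet] at hs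
                  obtain ⟨hne', e', he'⟩ := hs
                  apply Finset.mem_image.mpr
                  refine ⟨e', Finset.mem_univ _, ?_⟩
                  rcases he' with ⟨h1', h2'⟩ | ⟨h1', h2'⟩
                  · rw [h1', h2']
                  · rw [h1', h2', Sym2.eq_swap]
              have := sum_subset_image_le Finset.univ (fun e' : E => s(v0 e', v1 e'))
                G.edgeFinset f hfnn himg
              refine le_trans this (le_of_eq ?_)
              apply Finset.sum_congr rfl
              intro e' _
              rw [hgf]
              ring
            calc ∑ c, ∑ t ∈ Finset.range (N c - 1), (x (slot c (t+1)) - x (slot c t))^2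
                = ∑ c, ((wk c).edges.map f).sum := Finset.sum_congr rfl (fun c _ => hstep1 c)
              _ ≤ ∑ c, 2 * ∑ s ∈ G.edgeFinset.filter (fun s => edgeOf s = c), f s :=
                  Finset.sum_le_sum (fun c _ => hstep2 c)
              _ = 2 * ∑ c, ∑ s ∈ G.edgeFinset.filter (fun s => edgeOf s = c), f s := by
                  rw [Finset.mul_sum]
              _ = 2 * ∑ s ∈ G.edgeFinset, f s := by rw [hstep3]
              _ ≤ 2 * ∑ e', (x (v1 e') - x (v0 e'))^2 :=
                  mul_le_mul_of_nonneg_left hstep4 (by norm_num)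
          -- length accounting
          have hlen : ∑ c, (N c - 1) ≤ 2 * Fintype.card E := by
            have hlen1 : ∀ c, N c - 1 = (wk c).edges.length := by
              intro c
              simp only [hN]
              rw [(wk c).length_support, (wk c).length_edges]
              omega
            have hlen2 : ∀ c, (wk c).edges.length ≤ 2 * ((wk c).edges.toFinset.card) := by
              intro c
              have := Finset.sum_list_map_count ((wk c).edges) (fun _ => (1:ℕ))
              have hlen_eq : ((wk c).edges.map (fun _ => (1:ℕ))).sum = (wk c).edges.length := by
                simp
              rw [hlen_eq] at this
              rw [this]
              calc ∑ s ∈ (wk c).edges.toFinset, ((wk c).edges.count s) • (1:ℕ)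
                  ≤ ∑ s ∈ (wk c).edges.toFinset, 2 := by
                    apply Finset.sum_le_sum
                    intro s _
                    simp only [smul_eq_mul, mul_one]
                    exact hwkcnt c s
                _ = 2 * (wk c).edges.toFinset.card := by
                    rw [Finset.sum_const, smul_eq_mul, mul_comm]
            have hsub : ∀ c, (wk c).edges.toFinset ⊆
                G.edgeFinset.filter (fun s => edgeOf s = c) := by
              intro c s hs
              rw [List.mem_toFinset] at hs
              rw [Finset.mem_filter]
              exact ⟨hedge_in c s hs, hwkedge c s hs⟩
            have hcards : ∑ c, ((wk c).edges.toFinset.card) ≤ G.edgeFinset.card := by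
              calc ∑ c, ((wk c).edges.toFinset.card)
                  ≤ ∑ c, (G.edgeFinset.filter (fun s => edgeOf s = c)).card :=
                    Finset.sum_le_sum (fun c _ => Finset.card_le_card (hsub c))
                _ = G.edgeFinset.card := by
                    have hfib := Finset.sum_fiberwise_of_maps_to
                      (fun (s : Sym2 V) (_ : s ∈ G.edgeFinset) => Finset.mem_univ (edgeOf s))
                      (fun _ => (1:ℕ))
                    calc ∑ c, (G.edgeFinset.filter (fun s => edgeOf s = c)).card
                        = ∑ c, ∑ _s ∈ G.edgeFinset.filter (fun s => edgeOf s = c), (1:ℕ) := by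
                          apply Finset.sum_congr rfl
                          intro c _
                          rw [Finset.card_eq_sum_ones]
                      _ = ∑ _s ∈ G.edgeFinset, (1:ℕ) := hfib
                      _ = G.edgeFinset.card := (Finset.card_eq_sum_ones _).symm
            have hcardE : G.edgeFinset.card ≤ Fintype.card E := by
              have himg : G.edgeFinset ⊆ Finset.univ.image (fun e' : E => s(v0 e', v1 e')) := by
                intro s hs
                rw [SimpleGraph.mem_edgeFinset] at hs
                induction s using Sym2.ind with
                | _ p q =>
                  rw [SimpleGraph.mem_edgeSet] at hs
                  obtain ⟨hne', e', he'⟩ := hs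
                  apply Finset.mem_image.mpr
                  refine ⟨e', Finset.mem_univ _, ?_⟩
                  rcases he' with ⟨h1', h2'⟩ | ⟨h1', h2'⟩
                  · rw [h1', h2']
                  · rw [h1', h2', Sym2.eq_swap]
              calc G.edgeFinset.card ≤ (Finset.univ.image (fun e' : E => s(v0 e', v1 e'))).card :=
                    Finset.card_le_card himg
                _ ≤ Finset.univ.card := Finset.card_image_le
                _ = Fintype.card E := Finset.card_univ
            calc ∑ c, (N c - 1) = ∑ c, (wk c).edges.length :=
                  Finset.sum_congr rfl (fun c _ => hlen1 c)
              _ ≤ ∑ c, 2 * ((wk c).edges.toFinset.card) :=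
                  Finset.sum_le_sum (fun c _ => hlen2 c)
              _ = 2 * ∑ c, ((wk c).edges.toFinset.card) := by rw [Finset.mul_sum]
              _ ≤ 2 * G.edgeFinset.card := by omega
              _ ≤ 2 * Fintype.card E := by omega
          -- apply the core lemma
          have hcore := core_lemma v0 v1 lam h0 G.ConnectedComponent N slot comp
            hNc hcompc hcover hedgec henergy ℓ hl1 hwin U hUprop
          -- arithmetic conclusion
          have hsumdiv : ((∑ c, (N c - 1) / ℓ : ℕ) : ℝ)
              ≤ 2 * (Fintype.card E : ℝ) * (d:ℝ) * lam := by
            have hstep : ∀ c : G.ConnectedComponent, (((N c - 1) / ℓ : ℕ) : ℝ)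
                ≤ ((N c - 1 : ℕ) : ℝ) * ((d:ℝ) * lam) := by
              intro c
              calc (((N c - 1) / ℓ : ℕ) : ℝ) ≤ ((N c - 1 : ℕ):ℝ) / (ℓ:ℝ) := Nat.cast_div_le
                _ ≤ ((N c - 1 : ℕ):ℝ) * ((d:ℝ) * lam) := by
                    rw [div_eq_mul_inv]
                    apply mul_le_mul_of_nonneg_left _ (by positivity)
                    rw [inv_le_comm₀ (by exact_mod_cast hl1 : (0:ℝ) < (ℓ:ℝ)) hdlampos] at *
                    · exact hlge
            calc ((∑ c, (N c - 1) / ℓ : ℕ) : ℝ)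
                  = ∑ c, (((N c - 1) / ℓ : ℕ) : ℝ) := by rw [Nat.cast_sum]
              _ ≤ ∑ c, ((N c - 1 : ℕ) : ℝ) * ((d:ℝ) * lam) :=
                  Finset.sum_le_sum (fun c _ => hstep c)
              _ = (∑ c, ((N c - 1 : ℕ) : ℝ)) * ((d:ℝ) * lam) := by rw [Finset.sum_mul]
              _ ≤ (2 * (Fintype.card E : ℝ)) * ((d:ℝ) * lam) := by
                  apply mul_le_mul_of_nonneg_right _ (by positivity)
                  have : ((∑ c, (N c - 1) : ℕ) : ℝ) ≤ ((2 * Fintype.card E : ℕ):ℝ) := by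
                    exact_mod_cast hlen
                  push_cast at this ⊢
                  exact this
              _ = 2 * (Fintype.card E : ℝ) * (d:ℝ) * lam := by ring
          have hcoreR : (Module.finrank ℝ U : ℝ) ≤ (Module.finrank ℝ (LinearMap.ker A) : ℝ)
              + ((∑ c, (N c - 1) / ℓ : ℕ) : ℝ) := by
            exact_mod_cast hcore
          linarith [hcoreR, hsumdiv]
  linarith [main, hkerR]
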